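/- arXiv:1909.04335 — 2 statements merged into one kernel-verified Lean document; each statement's English description precedes it below -/
import Mathlib

section
/- Let σ₀ > 0 (the noise power N₀W), P ≥ 0, h ≥ 0, L > 0, and set γ = P·h/σ₀. Suppose real numbers ς, η, a, b satisfy exp(ς) ≤ L, exp(η) ≤ σ₀ + P·h, P·h ≤ exp(a), and 2σ₀ + P·h ≤ exp(b). Then √(γ(γ+2)) / (√L · (1+γ)) ≤ exp(a/2 + b/2 - η - ς/2). Consequently, for any constant c ≥ 0, log₂(1+γ) - c·√(2γ(γ+2)) / (√L·(1+γ)) ≥ log₂(1+γ) - c·√2·exp(a/2 + b/2 - η - ς/2). -/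
/-- The auxiliary-variable constraints of the relaxed problem RP give a valid
lower bound on the finite-blocklength rate: with `γ = P·h/σ₀`,
`√(γ(γ+2))/(√L·(1+γ)) ≤ exp(a/2 + b/2 - η - ς/2)`, and hence for every `c ≥ 0`
the rate `log₂(1+γ) - c·√(2γ(γ+2))/(√L·(1+γ))` is bounded below by
`log₂(1+γ) - c·√2·exp(a/2 + b/2 - η - ς/2)`. -/
theorem rp_rate_lower_bound
    (σ₀ P h L ς η a b : ℝ)
    (hσ₀ : 0 < σ₀) (hP : 0 ≤ P) (hh : 0 ≤ h) (hL : 0 < L)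
    (γ : ℝ) (hγ : γ = P * h / σ₀)
    (hς : Real.exp ς ≤ L)
    (hη : Real.exp η ≤ σ₀ + P * h)
    (ha : P * h ≤ Real.exp a)
    (hb : 2 * σ₀ + P * h ≤ Real.exp b) :
    Real.sqrt (γ * (γ + 2)) / (Real.sqrt L * (1 + γ)) ≤
      Real.exp (a / 2 + b / 2 - η - ς / 2) ∧
    ∀ c : ℝ, 0 ≤ c →
      Real.logb 2 (1 + γ) -
          c * Real.sqrt (2 * γ * (γ + 2)) / (Real.sqrt L * (1 + γ)) ≥
        Real.logb 2 (1 + γ) -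
          c * Real.sqrt 2 * Real.exp (a / 2 + b / 2 - η - ς / 2) := by
  have hX0 : 0 ≤ P * h := mul_nonneg hP hh
  have hσX : 0 < σ₀ + P * h := by linarith
  have hsL : 0 < Real.sqrt L := Real.sqrt_pos.mpr hL
  have hgg : γ * (γ + 2) = (P * h) * (P * h + 2 * σ₀) / σ₀ ^ 2 := by
    rw [hγ]; field_simp
  have h1γ : 1 + γ = (σ₀ + P * h) / σ₀ := by rw [hγ]; field_simp
  have hA0 : 0 ≤ (P * h) * (P * h + 2 * σ₀) := by positivity
  have hsqrt : Real.sqrt (γ * (γ + 2)) =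
      Real.sqrt ((P * h) * (P * h + 2 * σ₀)) / σ₀ := by
    rw [hgg, Real.sqrt_div hA0, Real.sqrt_sq hσ₀.le]
  have hmain : Real.sqrt (γ * (γ + 2)) / (Real.sqrt L * (1 + γ)) =
      Real.sqrt ((P * h) * (P * h + 2 * σ₀)) / (Real.sqrt L * (σ₀ + P * h)) := by
    rw [hsqrt, h1γ]; field_simp
  -- bound sqrt((P*h)*(P*h+2σ₀)) ≤ exp(a/2)*exp(b/2)
  have hAB : (P * h) * (P * h + 2 * σ₀) ≤ Real.exp a * Real.exp b := by
    have := mul_le_mul ha (by linarith : P * h + 2 * σ₀ ≤ Real.exp b)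
      (by linarith) (Real.exp_nonneg a)
    linarith
  have hsqrtAB : Real.sqrt ((P * h) * (P * h + 2 * σ₀)) ≤
      Real.exp (a / 2) * Real.exp (b / 2) := by
    have h1 : Real.exp a * Real.exp b =
        (Real.exp (a / 2) * Real.exp (b / 2)) ^ 2 := by
      rw [← Real.exp_add, ← Real.exp_add, sq, ← Real.exp_add]
      congr 1; ring
    calc Real.sqrt ((P * h) * (P * h + 2 * σ₀))
        ≤ Real.sqrt (Real.exp a * Real.exp b) := Real.sqrt_le_sqrt hAB
      _ = Real.exp (a / 2) * Real.exp (b / 2) := by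
          rw [h1, Real.sqrt_sq (by positivity)]
  have hL' : Real.exp (ς / 2) ≤ Real.sqrt L := by
    have : Real.sqrt (Real.exp ς) ≤ Real.sqrt L := Real.sqrt_le_sqrt hς
    rwa [show Real.exp ς = (Real.exp (ς / 2)) ^ 2 by
      rw [sq, ← Real.exp_add]; congr 1; ring, Real.sqrt_sq (Real.exp_nonneg _)] at this
  have key : Real.sqrt (γ * (γ + 2)) / (Real.sqrt L * (1 + γ)) ≤
      Real.exp (a / 2 + b / 2 - η - ς / 2) := by
    rw [hmain, div_le_iff₀ (by positivity)]
    have hexp : Real.exp (a / 2) * Real.exp (b / 2) =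
        Real.exp (a / 2 + b / 2 - η - ς / 2) * (Real.exp (ς / 2) * Real.exp η) := by
      rw [← Real.exp_add, ← Real.exp_add, ← Real.exp_add]; congr 1; ring
    calc Real.sqrt ((P * h) * (P * h + 2 * σ₀))
        ≤ Real.exp (a / 2) * Real.exp (b / 2) := hsqrtAB
      _ = Real.exp (a / 2 + b / 2 - η - ς / 2) * (Real.exp (ς / 2) * Real.exp η) := hexp
      _ ≤ Real.exp (a / 2 + b / 2 - η - ς / 2) * (Real.sqrt L * (σ₀ + P * h)) := by
          apply mul_le_mul_of_nonneg_left _ (Real.exp_nonneg _)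
          exact mul_le_mul hL' hη (Real.exp_nonneg _) hsL.le
  refine ⟨key, fun c hc => ?_⟩
  have hsplit : Real.sqrt (2 * γ * (γ + 2)) =
      Real.sqrt 2 * Real.sqrt (γ * (γ + 2)) := by
    rw [mul_assoc, Real.sqrt_mul (by norm_num)]
  have h2 : c * Real.sqrt (2 * γ * (γ + 2)) / (Real.sqrt L * (1 + γ)) ≤
      c * Real.sqrt 2 * Real.exp (a / 2 + b / 2 - η - ς / 2) := by
    rw [hsplit]
    have : c * (Real.sqrt 2 * Real.sqrt (γ * (γ + 2))) / (Real.sqrt L * (1 + γ)) =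
        (c * Real.sqrt 2) * (Real.sqrt (γ * (γ + 2)) / (Real.sqrt L * (1 + γ))) := by
      ring
    rw [this]
    exact mul_le_mul_of_nonneg_left key (by positivity)
  linarith
end

section
/- Let σ₀ > 0, h ≥ 0, D > 0, c ≥ 0, and suppose (P, L, ς, η, a, b, g, ρ) satisfies: L ≥ 1, 0 ≤ P, exp(ς) ≤ L, exp(η) ≤ σ₀ + P·h, P·h ≤ exp(a), 2σ₀ + P·h ≤ exp(b), P ≤ exp(g), L ≤ exp(ρ), and the relaxed rate constraint log₂(1 + P·h/σ₀) - c·√2·exp(a/2 + b/2 - η - ς/2) ≥ D/L. Then, with γ = P·h/σ₀, the original rate constraint log₂(1+γ) - c·√(2γ(γ+2)) / (√L·(1+γ)) ≥ D/L holds, and the energy objective satisfies P·L ≤ exp(g + ρ). In other words, every feasible point of the relaxed problem RP yields a feasible point of the power–blocklength problem SP1 whose objective P·L is upper bounded by exp(g + ρ). -/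
/-- Every feasible point of the relaxed problem RP yields a feasible point of
the power–blocklength problem SP1 (the original finite-blocklength rate
constraint holds) whose energy objective `P·L` is upper bounded by
`exp(g + ρ)`. -/
theorem rp_feasible_implies_sp1_feasible
    (σ₀ h D c P L ς η a b g ρ : ℝ)
    (hσ₀ : 0 < σ₀) (hh : 0 ≤ h) (hD : 0 < D) (hc : 0 ≤ c)
    (hL1 : 1 ≤ L) (hP : 0 ≤ P)
    (hς : Real.exp ς ≤ L)
    (hη : Real.exp η ≤ σ₀ + P * h)
    (ha : P * h ≤ Real.exp a)
    (hb : 2 * σ₀ + P * h ≤ Real.exp b)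
    (hg : P ≤ Real.exp g)
    (hρ : L ≤ Real.exp ρ)
    (hrate : Real.logb 2 (1 + P * h / σ₀) -
        c * Real.sqrt 2 * Real.exp (a / 2 + b / 2 - η - ς / 2) ≥ D / L) :
    (Real.logb 2 (1 + P * h / σ₀) -
        c * Real.sqrt (2 * (P * h / σ₀) * (P * h / σ₀ + 2)) /
          (Real.sqrt L * (1 + P * h / σ₀)) ≥ D / L) ∧
    P * L ≤ Real.exp (g + ρ) := by
  have hx : 0 ≤ P * h := mul_nonneg hP hh
  constructor
  · refine le_trans hrate (sub_le_sub_left ?_ _)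
    -- show c * sqrt(2γ(γ+2)) / (√L (1+γ)) ≤ c * √2 * exp(a/2+b/2-η-ς/2)
    rw [div_le_iff₀ (by positivity)]
    have key : Real.sqrt (2 * (P * h / σ₀) * (P * h / σ₀ + 2)) * σ₀ ≤
        Real.sqrt 2 * Real.exp (a / 2 + b / 2) := by
      have hq : 2 * (P * h / σ₀) * (P * h / σ₀ + 2) =
          2 * (P * h) * (P * h + 2 * σ₀) / σ₀ ^ 2 := by
        field_simp
      have h1 : Real.sqrt (2 * (P * h / σ₀) * (P * h / σ₀ + 2)) * σ₀ =
          Real.sqrt (2 * (P * h) * (P * h + 2 * σ₀)) := by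
        rw [hq, Real.sqrt_div (by positivity), Real.sqrt_sq hσ₀.le,
          div_mul_cancel₀ _ hσ₀.ne']
      rw [h1]
      have h2 : 2 * (P * h) * (P * h + 2 * σ₀) ≤
          (Real.sqrt 2 * Real.exp (a / 2 + b / 2)) ^ 2 := by
        have : (Real.sqrt 2 * Real.exp (a / 2 + b / 2)) ^ 2 =
            2 * (Real.exp a * Real.exp b) := by
          rw [mul_pow, Real.sq_sqrt (by norm_num), ← Real.exp_nat_mul]
          rw [← Real.exp_add]
          ring_nf
        rw [this]
        have := mul_le_mul ha (by linarith : P * h + 2 * σ₀ ≤ Real.exp b)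
          (by linarith) (Real.exp_pos a).le
        nlinarith
      calc Real.sqrt (2 * (P * h) * (P * h + 2 * σ₀))
          ≤ Real.sqrt ((Real.sqrt 2 * Real.exp (a / 2 + b / 2)) ^ 2) :=
            Real.sqrt_le_sqrt h2
        _ = Real.sqrt 2 * Real.exp (a / 2 + b / 2) := Real.sqrt_sq (by positivity)
    have hden : Real.exp (ς / 2) * (Real.exp η / σ₀) ≤ Real.sqrt L * (1 + P * h / σ₀) := by
      have hsL : Real.exp (ς / 2) ≤ Real.sqrt L := by
        have : Real.exp ς = Real.exp (ς / 2) ^ 2 := by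
          rw [sq, ← Real.exp_add]; ring_nf
        rw [show Real.exp (ς / 2) = Real.sqrt (Real.exp ς) by
          rw [this, Real.sqrt_sq (Real.exp_pos _).le]]
        exact Real.sqrt_le_sqrt hς
      have h2 : Real.exp η / σ₀ ≤ 1 + P * h / σ₀ := by
        rw [div_le_iff₀ hσ₀]
        have : (1 + P * h / σ₀) * σ₀ = σ₀ + P * h := by field_simp
        rw [this]; exact hη
      exact mul_le_mul hsL h2 (by positivity) (Real.sqrt_nonneg L)
    have expand : c * Real.sqrt 2 * Real.exp (a / 2 + b / 2 - η - ς / 2) *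
        (Real.sqrt L * (1 + P * h / σ₀)) ≥
        c * Real.sqrt 2 * Real.exp (a / 2 + b / 2 - η - ς / 2) *
        (Real.exp (ς / 2) * (Real.exp η / σ₀)) := by
      apply mul_le_mul_of_nonneg_left hden (by positivity)
    refine le_trans ?_ expand
    have heq : c * Real.sqrt 2 * Real.exp (a / 2 + b / 2 - η - ς / 2) *
        (Real.exp (ς / 2) * (Real.exp η / σ₀)) =
        c * (Real.sqrt 2 * Real.exp (a / 2 + b / 2)) / σ₀ := by
      rw [Real.exp_sub, Real.exp_sub]
      field_simp
    rw [heq, le_div_iff₀ hσ₀]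
    calc c * Real.sqrt (2 * (P * h / σ₀) * (P * h / σ₀ + 2)) * σ₀
        = c * (Real.sqrt (2 * (P * h / σ₀) * (P * h / σ₀ + 2)) * σ₀) := by ring
      _ ≤ c * (Real.sqrt 2 * Real.exp (a / 2 + b / 2)) :=
          mul_le_mul_of_nonneg_left key hc
  · rw [Real.exp_add]
    exact mul_le_mul hg hρ (by linarith) (Real.exp_pos g).le
end
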